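/- Let M and N be finite matroids on the same type α with M.E = N.E. If every flat of N is a flat of M (i.e. the identity is a strong map from M to N, so N is a quotient of M), then every flat of the dual matroid M✶ is a flat of the dual matroid N✶ (i.e. the identity is a strong map from N✶ to M✶). -/

import Mathlib

open Set

namespace Matroid

variable {α β γ : Type*}

/-- The rank of a set `X` in a matroid `M`: the size of a largest independent subset of `X`. -/
noncomputable def rk (M : Matroid α) (X : Set α) : ℕ :=
  sSup (Set.ncard '' {I | M.Indep I ∧ I ⊆ X})

/-- A strong map from `M` to `N` is a function whose image of the ground set lies in the
ground set, and such that the preimage of every flat, intersected with the ground set,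
is a flat. -/
def IsStrongMap (M : Matroid α) (N : Matroid β) (f : α → β) : Prop :=
  f '' M.E ⊆ N.E ∧ ∀ F, N.IsFlat F → M.IsFlat (f ⁻¹' F ∩ M.E)

/-- The deletion of `D` from `M`: the restriction of `M` to `M.E \ D`. -/
def delete' (M : Matroid α) (D : Set α) : Matroid α := M ↾ (M.E \ D)

/-- The contraction of `M` by `C`, defined as the dual of the deletion of `C`
from the dual matroid. -/
def contract' (M : Matroid α) (C : Set α) : Matroid α := (M✶.delete' C)✶

scoped infixl:75 " ＼ " => Matroid.delete'
scoped infixl:75 " ／ " => Matroid.contract'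

end Matroid

namespace Matroid

variable {M : Matroid α} {X F : Set α} {e : α}


lemma closure_flat' (M : Matroid α) (X : Set α) : M.IsFlat (M.closure X) := by
  rw [closure_def, sInter_eq_iInter]
  have : Nonempty {F | M.IsFlat F ∧ X ∩ M.E ⊆ F} :=
    ⟨⟨M.E, M.ground_isFlat, inter_subset_right⟩⟩
  exact IsFlat.iInter fun F ↦ F.2.1

lemma flat_of_closure_subset (hF : F ⊆ M.E) (h : M.closure F ⊆ F) : M.IsFlat F := by
  have : M.closure F = F := h.antisymm (M.subset_closure F hF)
  rw [← this]
  exact M.closure_flat' F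

/-- Direction (b): membership in the dual closure forbids membership in the
closure of the complement. -/
lemma not_mem_closure_compl_of_mem_dual_closure (hX : X ⊆ M.E) (he : e ∈ M.E) (heX : e ∉ X)
    (h : e ∈ M✶.closure X) : e ∉ M.closure ((M.E \ X) \ {e}) := by
  intro hcl
  obtain ⟨I, hI⟩ := M✶.exists_isBasis' X
  have hIX : I ⊆ X := hI.subset
  have heI : e ∉ I := fun h' ↦ heX (hIX h')
  set S := (M.E \ I) \ {e} with hS
  have hYS : (M.E \ X) \ {e} ⊆ S := by
    apply diff_subset_diff_left
    exact diff_subset_diff_right hIX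
  have heS : e ∈ M.closure S := M.closure_subset_closure hYS hcl
  obtain ⟨B0, hB0, hdj⟩ := (dual_indep_iff_exists (hIX.trans hX)).mp hI.indep
  have hB0S : B0 ⊆ M.closure S := by
    intro x hx
    rcases eq_or_ne x e with rfl | hxe
    · exact heS
    · exact M.subset_closure S (diff_subset.trans diff_subset)
        ⟨⟨hB0.subset_ground hx, fun hxI ↦ hdj.ne_of_mem hxI hx rfl⟩, hxe⟩
  have hSsp : M.Spanning S := by
    rw [spanning_iff_ground_subset_closure (diff_subset.trans diff_subset)]
    calc M.E = M.closure B0 := hB0.closure_eq.symm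
      _ ⊆ M.closure S := M.closure_subset_closure_of_subset_closure hB0S
  obtain ⟨B, hB, hBS⟩ := hSsp.exists_isBase_subset
  have hind : M✶.Indep (insert e I) := by
    rw [dual_indep_iff_exists (insert_subset he (hIX.trans hX))]
    refine ⟨B, hB, (disjoint_left.mpr fun x hxB hx ↦ ?_).symm⟩
    obtain ⟨⟨-, hxI⟩, hxe⟩ := hBS hxB
    rcases hx with rfl | hxI2
    · exact hxe rfl
    · exact hxI hxI2
  have : e ∉ M✶.closure I :=
    (hI.indep.notMem_closure_iff_of_notMem heI he).mpr hind
  rw [hI.closure_eq_closure] at this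
  exact this h

/-- Direction (a): if `e` is not in the closure of the complement, it is in the dual closure. -/
lemma mem_dual_closure_of_not_mem_closure_compl (_hX : X ⊆ M.E) (he : e ∈ M.E) (heX : e ∉ X)
    (h : e ∉ M.closure ((M.E \ X) \ {e})) : e ∈ M✶.closure X := by
  set Y := (M.E \ X) \ {e} with hY
  obtain ⟨I0, hI0⟩ := M.exists_isBasis Y (diff_subset.trans diff_subset)
  have heI0 : e ∉ M.closure I0 := by rwa [hI0.closure_eq_closure]
  have hins : M.Indep (insert e I0) := by
    rw [hI0.indep.insert_indep_iff]
    exact Or.inl ⟨he, heI0⟩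
  obtain ⟨B, hB, hBsup⟩ := hins.exists_isBase_superset
  set H := M.closure (B \ {e}) with hH
  have heB : e ∈ B := hBsup (mem_insert _ _)
  have heH : e ∉ H := hB.indep.notMem_closure_diff_of_mem heB
  have hYH : Y ⊆ H := by
    refine hI0.subset_closure.trans (M.closure_subset_closure ?_)
    refine subset_diff_singleton (fun x hx ↦ hBsup (mem_insert_of_mem _ hx)) ?_
    intro h2; exact heI0 (M.mem_closure_of_mem h2 (hI0.indep.subset_ground))
  set C := M.E \ H with hC
  have heC : e ∈ C := ⟨he, heH⟩
  have hCe_coindep : M✶.Indep (C \ {e}) := by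
    rw [dual_indep_iff_exists (diff_subset.trans diff_subset)]
    refine ⟨B, hB, ?_⟩
    rw [disjoint_comm, disjoint_iff_forall_ne]
    rintro x hxB y ⟨⟨-, hyH⟩, hye⟩ rfl
    rcases eq_or_ne x e with rfl | hxe
    · exact hye rfl
    · exact hyH (M.subset_closure _ (diff_subset.trans hB.subset_ground) ⟨hxB, hxe⟩)
  have hCdep : M✶.Dep C := by
    rw [dep_iff, dual_ground]
    refine ⟨fun hind ↦ ?_, diff_subset⟩
    obtain ⟨B2, hB2, hdj⟩ := (dual_indep_iff_exists (diff_subset)).mp hind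
    have hB2H : B2 ⊆ H := fun x hx ↦ by
      by_contra hxH
      exact hdj.ne_of_mem ⟨hB2.subset_ground hx, hxH⟩ hx rfl
    have h2 : M.closure B2 ⊆ H := by
      have h3 := M.closure_subset_closure hB2H
      rwa [hH, closure_closure, ← hH] at h3
    have h4 : M.E ⊆ H := calc
      M.E = M.closure B2 := hB2.closure_eq.symm
      _ ⊆ H := h2
    exact heH (h4 he)
  have hmem : e ∈ M✶.closure (C \ {e}) := by
    rw [hCe_coindep.mem_closure_iff]
    left
    rwa [insert_diff_singleton, insert_eq_of_mem heC]
  refine M✶.closure_subset_closure ?_ hmem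
  rintro x ⟨⟨hxE, hxH⟩, hxe⟩
  by_contra hxX
  exact hxH (hYH ⟨⟨hxE, hxX⟩, hxe⟩)


/-- if `N` is a quotient of `M` (every flat of `N` is a flat of `M`, same
ground set) then `M✶` is a quotient of `N✶`. -/
theorem dual_flat_of_quotient {α : Type*} (M N : Matroid α) [M.Finite] [N.Finite]
    (hE : M.E = N.E) (h : ∀ F, N.IsFlat F → M.IsFlat F) :
    ∀ F, M✶.IsFlat F → N✶.IsFlat F := by
  intro F hF
  have hFM : F ⊆ M.E := hF.subset_ground
  have hFN : F ⊆ N.E := hE ▸ hFM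
  have hclmono : ∀ Z : Set α, M.closure Z ⊆ N.closure Z := by
    intro Z
    have hMF : M.IsFlat (N.closure Z) := h _ (N.closure_flat' Z)
    calc M.closure Z = M.closure (Z ∩ M.E) := (M.closure_inter_ground Z).symm
      _ ⊆ M.closure (N.closure Z) := M.closure_subset_closure
          (by rw [hE]; exact N.inter_ground_subset_closure Z)
      _ = N.closure Z := hMF.closure
  refine flat_of_closure_subset (show F ⊆ N✶.E from hFN) ?_
  intro e heF
  by_contra heF2
  have heE : e ∈ N.E := by
    have h0 := mem_ground_of_mem_closure heF
    rwa [dual_ground] at h0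
  have heEM : e ∈ M.E := hE ▸ heE
  have h1 : e ∈ M.closure ((M.E \ F) \ {e}) := by
    by_contra h1
    have h2 := mem_dual_closure_of_not_mem_closure_compl hFM heEM heF2 h1
    rw [hF.closure] at h2
    exact heF2 h2
  have h3 : e ∈ N.closure ((N.E \ F) \ {e}) := by
    rw [← hE]
    exact hclmono _ h1
  exact not_mem_closure_compl_of_mem_dual_closure hFN heE heF2 heF h3

end Matroid
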